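/- Let Ω = {z ∈ ℂ : |z| < 1, z ∉ [0, 1/2]}. Then every function f continuous on cl(Ω) and holomorphic on Ω extends to a holomorphic function on the open unit disk; in particular Ω is not an A(Ω)-domain of holomorphy. -/

import Mathlib

open Metric Set Complex intervalIntegral MeasureTheory

noncomputable def RI (f : ℂ → ℂ) (a b c d : ℝ) : ℂ :=
  (∫ x : ℝ in a..b, f (x + c * I)) - (∫ x : ℝ in a..b, f (x + d * I)) +
    I • (∫ y : ℝ in c..d, f (b + y * I)) - I • ∫ y : ℝ in c..d, f (a + y * I)

lemma abs_sub_of_uIcc {a b t : ℝ} (h : t ∈ uIcc a b) : |t - a| ≤ |b - a| := by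
  rw [Set.mem_uIcc] at h
  rcases h with ⟨h1, h2⟩ | ⟨h1, h2⟩
  · rw [_root_.abs_of_nonneg (by linarith), _root_.abs_of_nonneg (by linarith)]; linarith
  · rw [_root_.abs_of_nonpos (by linarith), _root_.abs_of_nonpos (by linarith)]; linarith

section Morera

variable {f : ℂ → ℂ} {x₀ ρ : ℝ}

lemma morera_square (hρ : 0 < ρ)
    (hc : ContinuousOn f (Icc (x₀ - ρ) (x₀ + ρ) ×ℂ Icc (-ρ) ρ))
    (hd : ∀ z ∈ Icc (x₀ - ρ) (x₀ + ρ) ×ℂ Icc (-ρ) ρ, z.im ≠ 0 → DifferentiableAt ℂ f z) :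
    DifferentiableAt ℂ f (x₀ : ℂ) := by
  set Q : Set ℂ := Icc (x₀ - ρ) (x₀ + ρ) ×ℂ Icc (-ρ) ρ with hQ
  set Qo : Set ℂ := Ioo (x₀ - ρ) (x₀ + ρ) ×ℂ Ioo (-ρ) ρ with hQo
  have hQoQ : Qo ⊆ Q := fun u hu => by
    rw [mem_reProdIm] at hu ⊢
    exact ⟨Ioo_subset_Icc_self hu.1, Ioo_subset_Icc_self hu.2⟩
  have h0mem : (0 : ℝ) ∈ Icc (-ρ) ρ := ⟨by linarith, hρ.le⟩
  -- vertical integrability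
  have hvint : ∀ a ∈ Icc (x₀ - ρ) (x₀ + ρ), ∀ c ∈ Icc (-ρ) ρ, ∀ d ∈ Icc (-ρ) ρ,
      IntervalIntegrable (fun y : ℝ => f (a + y * I)) volume c d := by
    intro a ha c hcc d hdd
    apply ContinuousOn.intervalIntegrable
    apply hc.comp (by fun_prop : Continuous fun y : ℝ => (a : ℂ) + y * I).continuousOn
    intro y hy
    rw [mem_reProdIm]
    constructor
    · simpa using ha
    · simpa using uIcc_subset_Icc hcc hdd hy
  -- horizontal integrability
  have hhint : ∀ c ∈ Icc (-ρ) ρ, ∀ a ∈ Icc (x₀ - ρ) (x₀ + ρ), ∀ b ∈ Icc (x₀ - ρ) (x₀ + ρ),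
      IntervalIntegrable (fun x : ℝ => f (x + c * I)) volume a b := by
    intro c hcc a ha b hb
    apply ContinuousOn.intervalIntegrable
    apply hc.comp (by fun_prop : Continuous fun x : ℝ => (x : ℂ) + c * I).continuousOn
    intro y hy
    rw [mem_reProdIm]
    constructor
    · simpa using uIcc_subset_Icc ha hb hy
    · simpa using hcc
  -- base case of the vanishing of rectangle integrals
  have hbase : ∀ a ∈ Icc (x₀ - ρ) (x₀ + ρ), ∀ b ∈ Icc (x₀ - ρ) (x₀ + ρ),
      ∀ c ∈ Icc (-ρ) ρ, ∀ d ∈ Icc (-ρ) ρ,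
      ((0 ≤ c ∧ 0 ≤ d) ∨ (c ≤ 0 ∧ d ≤ 0)) → RI f a b c d = 0 := by
    intro a ha b hb c hcc d hdd hsign
    have hre1 : ((a : ℂ) + c * I).re = a := by simp
    have hre2 : ((b : ℂ) + d * I).re = b := by simp
    have him1 : ((a : ℂ) + c * I).im = c := by simp
    have him2 : ((b : ℂ) + d * I).im = d := by simp
    have := integral_boundary_rect_eq_zero_of_differentiable_on_off_countable f
      (a + c * I) (b + d * I) ∅ countable_empty ?_ ?_
    · rw [hre1, hre2, him1, him2] at this
      simpa [RI] using this
    · rw [hre1, hre2, him1, him2]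
      apply hc.mono
      intro u hu
      rw [mem_reProdIm] at hu ⊢
      exact ⟨uIcc_subset_Icc ha hb hu.1, uIcc_subset_Icc hcc hdd hu.2⟩
    · rw [hre1, hre2, him1, him2]
      rintro u ⟨hu, -⟩
      rw [mem_reProdIm] at hu
      have hure : u.re ∈ Icc (x₀ - ρ) (x₀ + ρ) := by
        refine ⟨?_, ?_⟩
        · have := hu.1.1
          rcases min_cases a b with ⟨h, -⟩ | ⟨h, -⟩ <;> [skip; skip] <;> rw [h] at this <;>
            [linarith [ha.1]; linarith [hb.1]]
        · have := hu.1.2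
          rcases max_cases a b with ⟨h, -⟩ | ⟨h, -⟩ <;> rw [h] at this <;>
            [linarith [ha.2]; linarith [hb.2]]
      have huim : u.im ∈ Icc (-ρ) ρ := by
        refine ⟨?_, ?_⟩
        · have := hu.2.1
          rcases min_cases c d with ⟨h, -⟩ | ⟨h, -⟩ <;> rw [h] at this <;>
            [linarith [hcc.1]; linarith [hdd.1]]
        · have := hu.2.2
          rcases max_cases c d with ⟨h, -⟩ | ⟨h, -⟩ <;> rw [h] at this <;>
            [linarith [hcc.2]; linarith [hdd.2]]
      apply hd u (by rw [mem_reProdIm]; exact ⟨hure, huim⟩)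
      rcases hsign with ⟨hc0, hd0⟩ | ⟨hc0, hd0⟩
      · exact ne_of_gt (lt_of_le_of_lt (le_min hc0 hd0) hu.2.1)
      · exact ne_of_lt (lt_of_lt_of_le hu.2.2 (max_le hc0 hd0))
  -- general vanishing of rectangle integrals
  have hvanish : ∀ a ∈ Icc (x₀ - ρ) (x₀ + ρ), ∀ b ∈ Icc (x₀ - ρ) (x₀ + ρ),
      ∀ c ∈ Icc (-ρ) ρ, ∀ d ∈ Icc (-ρ) ρ, RI f a b c d = 0 := by
    intro a ha b hb c hcc d hdd
    have h1 : RI f a b c 0 = 0 := by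
      apply hbase a ha b hb c hcc 0 h0mem
      rcases le_total c 0 with h | h
      · exact Or.inr ⟨h, le_rfl⟩
      · exact Or.inl ⟨h, le_rfl⟩
    have h2 : RI f a b 0 d = 0 := by
      apply hbase a ha b hb 0 h0mem d hdd
      rcases le_total d 0 with h | h
      · exact Or.inr ⟨le_rfl, h⟩
      · exact Or.inl ⟨le_rfl, h⟩
    have hadd1 := integral_add_adjacent_intervals
      (hvint b hb c hcc 0 h0mem) (hvint b hb 0 h0mem d hdd)
    have hadd2 := integral_add_adjacent_intervals
      (hvint a ha c hcc 0 h0mem) (hvint a ha 0 h0mem d hdd)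
    simp only [RI, smul_eq_mul] at h1 h2 hadd1 hadd2 ⊢
    linear_combination h1 + h2 - I * hadd1 + I * hadd2
  -- the primitive
  set F : ℂ → ℂ := fun z => (∫ t : ℝ in x₀..z.re, f (t + (0 : ℝ) * I)) +
      I • ∫ s : ℝ in (0 : ℝ)..z.im, f (z.re + s * I) with hF
  have hx0mem : x₀ ∈ Icc (x₀ - ρ) (x₀ + ρ) := ⟨by linarith, by linarith⟩
  have key : ∀ z ∈ Q, ∀ w ∈ Q, F w - F z =
      (∫ t : ℝ in z.re..w.re, f (t + (z.im : ℝ) * I)) +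
        I • ∫ s : ℝ in z.im..w.im, f (w.re + (s : ℝ) * I) := by
    intro z hz w hw
    rw [mem_reProdIm] at hz hw
    have hvan := hvanish z.re hz.1 w.re hw.1 0 h0mem z.im hz.2
    have hadd1 := integral_add_adjacent_intervals
      (hhint 0 h0mem x₀ hx0mem z.re hz.1) (hhint 0 h0mem z.re hz.1 w.re hw.1)
    have hadd2 := integral_add_adjacent_intervals
      (hvint w.re hw.1 0 h0mem z.im hz.2) (hvint w.re hw.1 z.im hz.2 w.im hw.2)
    simp only [hF]
    simp only [RI, smul_eq_mul] at hvan hadd1 hadd2 ⊢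
    linear_combination hvan - hadd1 - I * hadd2
  have hQoopen : IsOpen Qo := isOpen_Ioo.reProdIm isOpen_Ioo
  have hderiv : ∀ z ∈ Qo, HasDerivAt F (f z) z := by
    intro z hz
    have hzQ : z ∈ Q := hQoQ hz
    have hzQ' := hzQ
    rw [mem_reProdIm] at hzQ'
    rw [hasDerivAt_iff_isLittleO, Asymptotics.isLittleO_iff]
    intro ε hε
    have hcz : ContinuousWithinAt f Q z := hc z hzQ
    rw [Metric.continuousWithinAt_iff] at hcz
    obtain ⟨δ, hδ, Hδ⟩ := hcz (ε / 2) (by linarith)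
    obtain ⟨δ₁, hδ₁, hδ₁sub⟩ := Metric.isOpen_iff.1 hQoopen z hz
    have hδ₂ : 0 < min δ₁ (δ / 3) := lt_min hδ₁ (by linarith)
    filter_upwards [Metric.ball_mem_nhds z hδ₂] with w hw
    have hwz : ‖w - z‖ < min δ₁ (δ / 3) := by
      rw [Metric.mem_ball, dist_eq_norm] at hw; exact hw
    have hwQo : w ∈ Qo := hδ₁sub (by
      rw [Metric.mem_ball, dist_eq_norm]
      exact lt_of_lt_of_le hwz (min_le_left _ _))
    have hwQ : w ∈ Q := hQoQ hwQo
    have hwQ' := hwQ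
    rw [mem_reProdIm] at hwQ'
    have hkey := key z hzQ w hwQ
    have hrele : |w.re - z.re| ≤ ‖w - z‖ := by
      have := Complex.abs_re_le_norm (w - z)
      simpa using this
    have himle : |w.im - z.im| ≤ ‖w - z‖ := by
      have := Complex.abs_im_le_norm (w - z)
      simpa using this
    -- rewrite the difference as integrals of differences
    have hsub : F w - F z - (w - z) • f z =
        (∫ t : ℝ in z.re..w.re, (f (t + (z.im : ℝ) * I) - f z)) +
          I • ∫ s : ℝ in z.im..w.im, (f (w.re + (s : ℝ) * I) - f z) := by
      rw [intervalIntegral.integral_sub (hhint z.im hzQ'.2 z.re hzQ'.1 w.re hwQ'.1)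
          (intervalIntegrable_const),
        intervalIntegral.integral_sub (hvint w.re hwQ'.1 z.im hzQ'.2 w.im hwQ'.2)
          (intervalIntegrable_const),
        intervalIntegral.integral_const, intervalIntegral.integral_const]
      simp only [smul_eq_mul] at hkey ⊢
      simp only [Complex.real_smul, Complex.ofReal_sub]
      linear_combination hkey + f z * (Complex.re_add_im w) - f z * (Complex.re_add_im z)
    rw [hsub]
    -- bound the two integrals
    have hb1 : ‖∫ t : ℝ in z.re..w.re, (f (t + (z.im : ℝ) * I) - f z)‖ ≤
        ε / 2 * |w.re - z.re| := by
      apply intervalIntegral.norm_integral_le_of_norm_le_const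
      intro t ht
      have ht' : t ∈ uIcc z.re w.re := uIoc_subset_uIcc ht
      have huQ : (t : ℂ) + (z.im : ℝ) * I ∈ Q := by
        rw [mem_reProdIm]
        constructor
        · simpa using uIcc_subset_Icc hzQ'.1 hwQ'.1 ht'
        · simpa using hzQ'.2
      have hdist : dist ((t : ℂ) + (z.im : ℝ) * I) z < δ := by
        have h1 : dist ((t : ℂ) + (z.im : ℝ) * I) z ≤
            |((t : ℂ) + (z.im : ℝ) * I - z).re| + |((t : ℂ) + (z.im : ℝ) * I - z).im| := by
          rw [Complex.dist_eq]
          exact Complex.norm_le_abs_re_add_abs_im _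
        have h2 : ((t : ℂ) + (z.im : ℝ) * I - z).re = t - z.re := by simp
        have h3 : ((t : ℂ) + (z.im : ℝ) * I - z).im = 0 := by simp
        rw [h2, h3] at h1
        have h4 : |t - z.re| ≤ |w.re - z.re| := abs_sub_of_uIcc ht'
        have h5 : ‖w - z‖ < δ / 3 := lt_of_lt_of_le hwz (min_le_right _ _)
        simp only [abs_zero, add_zero] at h1
        linarith [hrele]
      have := Hδ huQ hdist
      rw [dist_eq_norm] at this
      linarith
    have hb2 : ‖∫ s : ℝ in z.im..w.im, (f (w.re + (s : ℝ) * I) - f z)‖ ≤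
        ε / 2 * |w.im - z.im| := by
      apply intervalIntegral.norm_integral_le_of_norm_le_const
      intro t ht
      have ht' : t ∈ uIcc z.im w.im := uIoc_subset_uIcc ht
      have huQ : ((w.re : ℂ)) + (t : ℝ) * I ∈ Q := by
        rw [mem_reProdIm]
        constructor
        · simpa using hwQ'.1
        · simpa using uIcc_subset_Icc hzQ'.2 hwQ'.2 ht'
      have hdist : dist ((w.re : ℂ) + (t : ℝ) * I) z < δ := by
        have h1 : dist ((w.re : ℂ) + (t : ℝ) * I) z ≤
            |((w.re : ℂ) + (t : ℝ) * I - z).re| + |((w.re : ℂ) + (t : ℝ) * I - z).im| := by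
          rw [Complex.dist_eq]
          exact Complex.norm_le_abs_re_add_abs_im _
        have h2 : ((w.re : ℂ) + (t : ℝ) * I - z).re = w.re - z.re := by simp
        have h3 : ((w.re : ℂ) + (t : ℝ) * I - z).im = t - z.im := by simp
        rw [h2, h3] at h1
        have h4 : |t - z.im| ≤ |w.im - z.im| := abs_sub_of_uIcc ht'
        have h5 : ‖w - z‖ < δ / 3 := lt_of_lt_of_le hwz (min_le_right _ _)
        linarith [hrele, himle]
      have := Hδ huQ hdist
      rw [dist_eq_norm] at this
      linarith
    calc ‖(∫ t : ℝ in z.re..w.re, (f (t + (z.im : ℝ) * I) - f z)) +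
          I • ∫ s : ℝ in z.im..w.im, (f (w.re + (s : ℝ) * I) - f z)‖
        ≤ ‖∫ t : ℝ in z.re..w.re, (f (t + (z.im : ℝ) * I) - f z)‖ +
          ‖I • ∫ s : ℝ in z.im..w.im, (f (w.re + (s : ℝ) * I) - f z)‖ := norm_add_le _ _
      _ = ‖∫ t : ℝ in z.re..w.re, (f (t + (z.im : ℝ) * I) - f z)‖ +
          ‖∫ s : ℝ in z.im..w.im, (f (w.re + (s : ℝ) * I) - f z)‖ := by
          rw [norm_smul, Complex.norm_I, one_mul]
      _ ≤ ε / 2 * |w.re - z.re| + ε / 2 * |w.im - z.im| := add_le_add hb1 hb2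
      _ ≤ ε / 2 * ‖w - z‖ + ε / 2 * ‖w - z‖ := by
          have hε2 : (0 : ℝ) ≤ ε / 2 := by linarith
          exact add_le_add (mul_le_mul_of_nonneg_left hrele hε2)
            (mul_le_mul_of_nonneg_left himle hε2)
      _ = ε * ‖w - z‖ := by ring
  -- conclude
  have hFd : DifferentiableOn ℂ F Qo :=
    fun u hu => (hderiv u hu).differentiableAt.differentiableWithinAt
  have hx₀Qo : (x₀ : ℂ) ∈ Qo := by
    rw [mem_reProdIm]
    constructor
    · simp only [Complex.ofReal_re]; exact ⟨by linarith, by linarith⟩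
    · simp only [Complex.ofReal_im]; exact ⟨by linarith, hρ⟩
  have hda : DifferentiableOn ℂ (deriv F) Qo :=
    ((hFd.analyticOnNhd hQoopen).deriv).differentiableOn
  have hdF : DifferentiableAt ℂ (deriv F) (x₀ : ℂ) :=
    hda.differentiableAt (hQoopen.mem_nhds hx₀Qo)
  apply hdF.congr_of_eventuallyEq
  filter_upwards [hQoopen.mem_nhds hx₀Qo] with u hu
  exact ((hderiv u hu).deriv).symm

end Morera

lemma seg_im {z : ℂ} (hz : z ∈ segment ℝ (0 : ℂ) (1/2 : ℂ)) : z.im = 0 := by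
  obtain ⟨a, b, _, _, _, rfl⟩ := hz
  simp [Complex.real_smul]

/-- `f` is extendable in the sense of Riemann domains from the planar domain `Ω`. -/
def ExtendableRiemannC (Ω : Set ℂ) (f : ℂ → ℂ) : Prop :=
  ∃ (c₁ c₂ : ℂ) (r₁ r₂ : ℝ), 0 < r₁ ∧ 0 < r₂ ∧
    closedBall c₁ r₁ ⊆ ball c₂ r₂ ∩ Ω ∧
    (ball c₂ r₂ ∩ Ω).Nonempty ∧ (ball c₂ r₂ ∩ Ωᶜ).Nonempty ∧
    ∃ (F : ℂ → ℂ) (M : ℝ), DifferentiableOn ℂ F (ball c₂ r₂) ∧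
      (∀ z ∈ ball c₂ r₂, ‖F z‖ ≤ M) ∧ EqOn F f (ball c₁ r₁)

theorem stmt14 (Ω : Set ℂ)
    (hΩ : Ω = {z : ℂ | ‖z‖ < 1 ∧ z ∉ segment ℝ (0 : ℂ) (1/2 : ℂ)})
    (f : ℂ → ℂ) (hcont : ContinuousOn f (closure Ω))
    (hdiff : DifferentiableOn ℂ f Ω) :
    (∃ g : ℂ → ℂ, DifferentiableOn ℂ g (ball (0 : ℂ) 1) ∧ EqOn g f Ω) ∧
    ExtendableRiemannC Ω f := by
  set S : Set ℂ := segment ℝ (0 : ℂ) (1/2 : ℂ) with hS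
  have hSclosed : IsClosed S := by
    rw [hS, segment_eq_image]
    exact (isCompact_Icc.image (by fun_prop)).isClosed
  have hΩopen : IsOpen Ω := by
    have : Ω = ball (0 : ℂ) 1 ∩ Sᶜ := by
      rw [hΩ]; ext z; simp [mem_ball_zero_iff, hS]
    rw [this]
    exact isOpen_ball.inter hSclosed.isOpen_compl
  have hball : ball (0 : ℂ) 1 ⊆ closure Ω := by
    intro z hz
    rw [mem_ball_zero_iff] at hz
    by_cases hzS : z ∈ S
    · have hzim : z.im = 0 := seg_im hzS
      have htend : Filter.Tendsto (fun t : ℝ => z + t * I) (nhdsWithin 0 (Ioi 0)) (nhds z) := by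
        have : Filter.Tendsto (fun t : ℝ => z + t * I) (nhds 0) (nhds z) := by
          have h1 : Continuous (fun t : ℝ => z + t * I) := by fun_prop
          simpa using h1.tendsto 0
        exact this.mono_left nhdsWithin_le_nhds
      apply mem_closure_of_tendsto htend
      filter_upwards [Ioo_mem_nhdsGT_of_mem (by constructor <;> linarith :
          (0 : ℝ) ∈ Ico 0 (1 - ‖z‖))] with t ht
      rw [hΩ]
      constructor
      · calc ‖z + (t : ℝ) * I‖ ≤ ‖z‖ + ‖(t : ℝ) * I‖ := norm_add_le _ _
          _ = ‖z‖ + |t| := by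
              rw [norm_mul, Complex.norm_I, mul_one, Complex.norm_real, Real.norm_eq_abs]
          _ = ‖z‖ + t := by rw [_root_.abs_of_pos ht.1]
          _ < 1 := by linarith [ht.2]
      · intro hmem
        have := seg_im hmem
        simp only [Complex.add_im, Complex.mul_I_im, Complex.ofReal_re, hzim, zero_add] at this
        exact absurd this (ne_of_gt ht.1)
    · apply subset_closure
      rw [hΩ]; exact ⟨hz, hzS⟩
  have hfc : ContinuousOn f (ball (0 : ℂ) 1) := hcont.mono hball
  -- main removability statement
  have hmain : DifferentiableOn ℂ f (ball (0 : ℂ) 1) := by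
    intro z hz
    apply DifferentiableAt.differentiableWithinAt
    rw [mem_ball_zero_iff] at hz
    by_cases hzS : z ∈ S
    · -- use Morera's square around the real point z
      have hzim : z.im = 0 := seg_im hzS
      set ρ : ℝ := (1 - ‖z‖) / 4 with hρdef
      have hρ : 0 < ρ := by
        have := hz; simp only [hρdef]; linarith
      have hQsub : Icc (z.re - ρ) (z.re + ρ) ×ℂ Icc (-ρ) ρ ⊆ ball (0 : ℂ) 1 := by
        intro u hu
        rw [mem_reProdIm] at hu
        rw [mem_ball_zero_iff]
        have h1 : ‖u - z‖ ≤ |u.re - z.re| + |u.im - z.im| := by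
          have := Complex.norm_le_abs_re_add_abs_im (u - z)
          simpa using this
        have h2 : |u.re - z.re| ≤ ρ := by
          rw [abs_le]; exact ⟨by linarith [hu.1.1], by linarith [hu.1.2]⟩
        have h3 : |u.im - z.im| ≤ ρ := by
          rw [hzim, sub_zero, abs_le]; exact ⟨hu.2.1, hu.2.2⟩
        calc ‖u‖ ≤ ‖u - z‖ + ‖z‖ := by
              have := norm_add_le (u - z) z; simpa using this
          _ ≤ ρ + ρ + ‖z‖ := by linarith
          _ < 1 := by simp only [hρdef]; linarith
      have hmor := morera_square hρ (f := f) (x₀ := z.re) (hfc.mono hQsub) ?_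
      · have : ((z.re : ℝ) : ℂ) = z := by
          apply Complex.ext <;> simp [hzim]
        rwa [this] at hmor
      · intro u hu huim
        apply hdiff.differentiableAt (hΩopen.mem_nhds _)
        rw [hΩ]
        refine ⟨mem_ball_zero_iff.mp (hQsub hu), fun hmem => huim (seg_im hmem)⟩
    · apply hdiff.differentiableAt (hΩopen.mem_nhds _)
      rw [hΩ]; exact ⟨hz, hzS⟩
  refine ⟨⟨f, hmain, fun z _ => rfl⟩, ?_⟩
  -- extendability data
  refine ⟨I/4, 0, 1/8, 1/2, by norm_num, by norm_num, ?_, ?_, ?_, ?_⟩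
  · -- closedBall (I/4) (1/8) ⊆ ball 0 (1/2) ∩ Ω
    intro u hu
    rw [mem_closedBall, Complex.dist_eq] at hu
    have hI4 : ‖(I/4 : ℂ)‖ = 1/4 := by
      simp [norm_div, Complex.norm_I]
    have hu1 : ‖u‖ ≤ 3/8 := by
      calc ‖u‖ ≤ ‖u - I/4‖ + ‖(I/4 : ℂ)‖ := by
            have := norm_add_le (u - I/4) (I/4); simpa using this
        _ ≤ 1/8 + 1/4 := by rw [hI4]; linarith
        _ = 3/8 := by norm_num
    have huim : (1 : ℝ)/8 ≤ u.im := by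
      have h1 : |(u - I/4).im| ≤ ‖u - I/4‖ := Complex.abs_im_le_norm _
      have h2 : (u - I/4).im = u.im - 1/4 := by simp
      rw [h2] at h1
      have := abs_le.mp (le_trans h1 hu)
      linarith [this.1]
    constructor
    · rw [mem_ball_zero_iff]; linarith
    · rw [hΩ]
      refine ⟨by linarith, fun hmem => ?_⟩
      have := seg_im hmem
      linarith [huim, this ▸ huim]
  · -- ball 0 (1/2) ∩ Ω nonempty
    refine ⟨I/4, ?_, ?_⟩
    · rw [mem_ball_zero_iff]
      have : ‖(I : ℂ)/4‖ = 1/4 := by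
        simp [norm_div, Complex.norm_I]
      rw [this]; norm_num
    · rw [hΩ]
      refine ⟨?_, fun hmem => ?_⟩
      · have : ‖(I : ℂ)/4‖ = 1/4 := by
          simp [norm_div, Complex.norm_I]
        rw [this]; norm_num
      · have := seg_im hmem
        simp at this
  · -- ball 0 (1/2) ∩ Ωᶜ nonempty
    refine ⟨(1/4 : ℂ), ?_, ?_⟩
    · rw [mem_ball_zero_iff]
      have : ‖(1/4 : ℂ)‖ = 1/4 := by norm_num
      rw [this]; norm_num
    · rw [mem_compl_iff, hΩ]
      intro hmem
      apply hmem.2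
      refine ⟨1/2, 1/2, by norm_num, by norm_num, by norm_num, ?_⟩
      simp [Complex.real_smul]
      norm_num
  · -- bounded holomorphic extension on ball 0 (1/2)
    obtain ⟨M, hM⟩ := (isCompact_closedBall (0 : ℂ) (1/2)).exists_bound_of_continuousOn
      (hfc.mono (closedBall_subset_ball (by norm_num)))
    exact ⟨f, M, hmain.mono (ball_subset_ball (by norm_num)),
      fun z hz => hM z (ball_subset_closedBall hz), fun z _ => rfl⟩
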